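/- Suppose ‖Γ‖_∞ < ∞ and let q ∈ Ŝ. Then for every i ∈ ℕ the function y ↦ G_i(q,y) is Lebesgue integrable on X and ∫_X G_i(q,y) λ_X(dy) = ∑_{j≠i} q_j Γ_ji(q) − q_i ∑_{j≠i} Γ_ij(q) = ∑_j q_j Γ_ji(q); consequently y ↦ G(q,y) is Bochner integrable with values in ℓ²(ℕ) and ∫_X G(q,y) λ_X(dy) = b(q), where b(q) := ∑_i (∑_j q_j Γ_ji(q)) e_i. -/

import Mathlib

noncomputable section
open MeasureTheory

/-- The Hilbert space `ℓ²(ℕ)` of square-summable real sequences. -/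
abbrev H2 : Type := lp (fun _ : ℕ => ℝ) 2

/-- The simplex `Ŝ` of probability vectors in `ℓ²(ℕ)`. -/
def simplexS : Set H2 := {q | (∀ i, 0 ≤ q i) ∧ HasSum (fun i => q i) 1}

/-- The set `A_ij(q) ⊆ X = [0,∞)²` (here `K` plays the role of `‖Γ‖_∞`). -/
def Aset (K : ℝ) (Γ : H2 → ℕ → ℕ → ℝ) (q : H2) (i j : ℕ) : Set (ℝ × ℝ) :=
  Set.Ioc (i : ℝ) (i + 1) ×ˢ Set.Ioc ((j : ℝ) * K) ((j : ℝ) * K + q i * Γ q i j)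

/-- The map `G : Ŝ × X → ℓ²(ℕ)`, `G(q,y) = ∑_{i ≠ j} (e_j − e_i) 1_{A_ij(q)}(y)`:
since the `A_ij(q)` are pairwise disjoint, `G(q,y) = e_j − e_i` for the (unique)
pair `(i,j)`, `i ≠ j`, with `y ∈ A_ij(q)`, and `G(q,y) = 0` otherwise. -/
def Gmap (K : ℝ) (Γ : H2 → ℕ → ℕ → ℝ) (q : H2) (y : ℝ × ℝ) : H2 :=
  @dite _ (∃ p : ℕ × ℕ, p.1 ≠ p.2 ∧ y ∈ Aset K Γ q p.1 p.2) (Classical.dec _)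
    (fun h => lp.single 2 h.choose.2 1 - lp.single 2 h.choose.1 1) (fun _ => 0)

/-- The rate matrix hypotheses: `Γ_ij(q) ≥ 0` for `i ≠ j`,
`Γ_ii(q) = −∑_{j≠i} Γ_ij(q)` (a convergent sum), and `K` is an upper bound for
`sup_{q∈Ŝ} sup_i |Γ_ii(q)|` (i.e. `‖Γ‖_∞ ≤ K < ∞`). -/
structure RateMatrix (K : ℝ) (Γ : H2 → ℕ → ℕ → ℝ) : Prop where
  nonneg : ∀ q ∈ simplexS, ∀ i j, i ≠ j → 0 ≤ Γ q i j
  diag : ∀ q ∈ simplexS, ∀ i,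
    HasSum (fun j => if j = i then 0 else Γ q i j) (-(Γ q i i))
  bound : ∀ q ∈ simplexS, ∀ i, |Γ q i i| ≤ K

/-! ### Auxiliary lemmas -/

lemma H2_add (f g : H2) (i : ℕ) : (f + g) i = f i + g i := congrFun (lp.coeFn_add f g) i

lemma H2_smul (c : ℝ) (f : H2) (i : ℕ) : (c • f) i = c * f i := congrFun (lp.coeFn_smul c f) i

lemma H2_sub (f g : H2) (i : ℕ) : (f - g) i = f i - g i := congrFun (lp.coeFn_sub f g) i

lemma H2_zero (i : ℕ) : (0 : H2) i = 0 := congrFun (lp.coeFn_zero (fun _ : ℕ => ℝ) 2) i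

/-- Evaluation at a coordinate as a continuous linear map. -/
def evalCLM (i : ℕ) : H2 →L[ℝ] ℝ :=
  LinearMap.mkContinuous
    { toFun := fun f => f i
      map_add' := fun f g => H2_add f g i
      map_smul' := fun c f => H2_smul c f i }
    1 (fun f => by simpa using lp.norm_apply_le_norm two_ne_zero f i)

lemma norm_H2_single (i : ℕ) : ‖lp.single (E := fun _ : ℕ => ℝ) 2 i (1:ℝ)‖ = 1 := by
  have := lp.norm_single (p := 2) (E := fun _ : ℕ => ℝ) (by norm_num) i (1:ℝ)
  simpa using this

section Facts
variable {K : ℝ} {Γ : H2 → ℕ → ℕ → ℝ} {q : H2}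

lemma Aset_meas (K : ℝ) (Γ : H2 → ℕ → ℕ → ℝ) (q : H2) (i j : ℕ) :
    MeasurableSet (Aset K Γ q i j) :=
  measurableSet_Ioc.prod measurableSet_Ioc

lemma Aset_vol (K : ℝ) (Γ : H2 → ℕ → ℕ → ℝ) (q : H2) (i j : ℕ) :
    volume (Aset K Γ q i j) = ENNReal.ofReal (q i * Γ q i j) := by
  rw [Aset, Measure.volume_eq_prod, Measure.prod_prod, Real.volume_Ioc, Real.volume_Ioc]
  simp

variable (hK0 : 0 ≤ K) (hΓ : RateMatrix K Γ) (hq : q ∈ simplexS)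
include hΓ hq

lemma q_le_one (i : ℕ) : q i ≤ 1 := le_hasSum hq.2 i (fun j _ => hq.1 j)

lemma row_nonneg (i : ℕ) : ∀ j, 0 ≤ if j = i then 0 else Γ q i j := by
  intro j
  by_cases h : j = i
  · simp [h]
  · simpa [h] using hΓ.nonneg q hq i j (fun hc => h hc.symm)

lemma Γ_le_K {i j : ℕ} (hij : i ≠ j) : Γ q i j ≤ K := by
  have h1 : (if j = i then 0 else Γ q i j) ≤ -(Γ q i i) :=
    le_hasSum (hΓ.diag q hq i) j (fun k _ => row_nonneg hΓ hq i k)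
  have h2 : -(Γ q i i) ≤ K := (neg_le_abs _).trans (hΓ.bound q hq i)
  rw [if_neg (Ne.symm hij)] at h1
  linarith

lemma qΓ_nonneg {i j : ℕ} (hij : i ≠ j) : 0 ≤ q i * Γ q i j :=
  mul_nonneg (hq.1 i) (hΓ.nonneg q hq i j hij)

include hK0 in
lemma qΓ_le_K {i j : ℕ} (hij : i ≠ j) : q i * Γ q i j ≤ K := by
  have h1 : q i * Γ q i j ≤ 1 * Γ q i j :=
    mul_le_mul_of_nonneg_right (q_le_one hΓ hq i) (hΓ.nonneg q hq i j hij)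
  have := Γ_le_K hΓ hq hij
  linarith

include hK0 in
lemma Aset_unique {p p' : ℕ × ℕ} (hp : p.1 ≠ p.2) (hp' : p'.1 ≠ p'.2) {y : ℝ × ℝ}
    (hy : y ∈ Aset K Γ q p.1 p.2) (hy' : y ∈ Aset K Γ q p'.1 p'.2) : p = p' := by
  obtain ⟨i, j⟩ := p
  obtain ⟨i', j'⟩ := p'
  simp only [Aset, Set.mem_prod, Set.mem_Ioc] at hy hy'
  obtain ⟨⟨h11, h12⟩, h13, h14⟩ := hy
  obtain ⟨⟨h21, h22⟩, h23, h24⟩ := hy'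
  have hi : i = i' := by
    by_contra hii
    rcases Nat.lt_or_ge i i' with h | h
    · have : (i : ℝ) + 1 ≤ (i' : ℝ) := by exact_mod_cast Nat.succ_le_of_lt h
      linarith
    · have h' : i' < i := lt_of_le_of_ne h (fun hc => hii hc.symm)
      have : (i' : ℝ) + 1 ≤ (i : ℝ) := by exact_mod_cast Nat.succ_le_of_lt h'
      linarith
  subst hi
  have hj : j = j' := by
    by_contra hjj
    have hb : q i * Γ q i j ≤ K := qΓ_le_K hK0 hΓ hq hp
    have hb' : q i * Γ q i j' ≤ K := qΓ_le_K hK0 hΓ hq hp'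
    rcases Nat.lt_or_ge j j' with h | h
    · have h1 : ((j : ℝ) + 1) * K ≤ (j' : ℝ) * K := by
        apply mul_le_mul_of_nonneg_right _ hK0
        exact_mod_cast Nat.succ_le_of_lt h
      nlinarith
    · have h' : j' < j := lt_of_le_of_ne h (fun hc => hjj hc.symm)
      have h1 : ((j' : ℝ) + 1) * K ≤ (j : ℝ) * K := by
        apply mul_le_mul_of_nonneg_right _ hK0
        exact_mod_cast Nat.succ_le_of_lt h'
      nlinarith
  rw [hj]

include hK0 in
lemma Gmap_eq {p : ℕ × ℕ} {y : ℝ × ℝ} (hp : p.1 ≠ p.2) (hy : y ∈ Aset K Γ q p.1 p.2) :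
    Gmap K Γ q y = lp.single 2 p.2 1 - lp.single 2 p.1 1 := by
  have hex : ∃ p : ℕ × ℕ, p.1 ≠ p.2 ∧ y ∈ Aset K Γ q p.1 p.2 := ⟨p, hp, hy⟩
  have hc := hex.choose_spec
  have he : hex.choose = p := Aset_unique hK0 hΓ hq hc.1 hp hc.2 hy
  simp only [Gmap]
  rw [dif_pos hex, he]

end Facts

lemma Gmap_eq_zero {K : ℝ} {Γ : H2 → ℕ → ℕ → ℝ} {q : H2} {y : ℝ × ℝ}
    (h : ¬ ∃ p : ℕ × ℕ, p.1 ≠ p.2 ∧ y ∈ Aset K Γ q p.1 p.2) : Gmap K Γ q y = 0 := by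
  simp only [Gmap]
  rw [dif_neg h]

/-- Positive-part union for coordinate `i`. -/
def Up (K : ℝ) (Γ : H2 → ℕ → ℕ → ℝ) (q : H2) (i : ℕ) : Set (ℝ × ℝ) :=
  ⋃ j, if j = i then ∅ else Aset K Γ q j i

/-- Negative-part union for coordinate `i`. -/
def Um (K : ℝ) (Γ : H2 → ℕ → ℕ → ℝ) (q : H2) (i : ℕ) : Set (ℝ × ℝ) :=
  ⋃ j, if j = i then ∅ else Aset K Γ q i j

section Main
variable {K : ℝ} {Γ : H2 → ℕ → ℕ → ℝ} {q : H2}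
variable (hK0 : 0 ≤ K) (hΓ : RateMatrix K Γ) (hq : q ∈ simplexS)

lemma mem_Up_iff {i : ℕ} {y : ℝ × ℝ} :
    y ∈ Up K Γ q i ↔ ∃ j, j ≠ i ∧ y ∈ Aset K Γ q j i := by
  simp only [Up, Set.mem_iUnion]
  constructor
  · rintro ⟨j, hj⟩
    by_cases h : j = i
    · simp [h] at hj
    · exact ⟨j, h, by simpa [h] using hj⟩
  · rintro ⟨j, hj, hy⟩
    exact ⟨j, by simpa [hj] using hy⟩

lemma mem_Um_iff {i : ℕ} {y : ℝ × ℝ} :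
    y ∈ Um K Γ q i ↔ ∃ j, j ≠ i ∧ y ∈ Aset K Γ q i j := by
  simp only [Um, Set.mem_iUnion]
  constructor
  · rintro ⟨j, hj⟩
    by_cases h : j = i
    · simp [h] at hj
    · exact ⟨j, h, by simpa [h] using hj⟩
  · rintro ⟨j, hj, hy⟩
    exact ⟨j, by simpa [hj] using hy⟩

include hK0 hΓ hq in
/-- Pointwise description of the `i`-th coordinate of `Gmap`. -/
lemma Gmap_coord (i : ℕ) (y : ℝ × ℝ) :
    Gmap K Γ q y i = (Up K Γ q i).indicator (fun _ => (1:ℝ)) y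
      - (Um K Γ q i).indicator (fun _ => (1:ℝ)) y := by
  by_cases hex : ∃ p : ℕ × ℕ, p.1 ≠ p.2 ∧ y ∈ Aset K Γ q p.1 p.2
  · obtain ⟨p, hp, hy⟩ := hex
    rw [Gmap_eq hK0 hΓ hq hp hy, H2_sub]
    have huniq : ∀ p' : ℕ × ℕ, p'.1 ≠ p'.2 → y ∈ Aset K Γ q p'.1 p'.2 → p' = p :=
      fun p' hp' hy' => Aset_unique hK0 hΓ hq hp' hp hy' hy
    by_cases h2 : i = p.2
    · have hup : y ∈ Up K Γ q i := mem_Up_iff.2 ⟨p.1, by rw [h2]; exact hp, by rw [h2]; exact hy⟩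
      have hum : y ∉ Um K Γ q i := by
        rw [mem_Um_iff]
        rintro ⟨j, hj, hyj⟩
        have := huniq (i, j) (by simpa using fun hc => hj hc.symm) hyj
        have h1 : i = p.1 := congrArg Prod.fst this
        exact hp (h1 ▸ h2.symm ▸ rfl)
      rw [Set.indicator_of_mem hup, Set.indicator_of_notMem hum, h2,
        lp.single_apply_self, lp.single_apply_ne 2 p.1 _ (fun hc : p.2 = p.1 => hp hc.symm)]
    · by_cases h1 : i = p.1
      · have hum : y ∈ Um K Γ q i :=
          mem_Um_iff.2 ⟨p.2, fun hc => h2 hc.symm, by rw [h1]; exact hy⟩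
        have hup : y ∉ Up K Γ q i := by
          rw [mem_Up_iff]
          rintro ⟨j, hj, hyj⟩
          have := huniq (j, i) (by simpa using hj) hyj
          exact h2 (congrArg Prod.snd this)
        rw [Set.indicator_of_notMem hup, Set.indicator_of_mem hum, h1,
          lp.single_apply_self, lp.single_apply_ne 2 p.2 _ (h1 ▸ h2)]
      · have hum : y ∉ Um K Γ q i := by
          rw [mem_Um_iff]
          rintro ⟨j, hj, hyj⟩
          have := huniq (i, j) (by simpa using fun hc => hj hc.symm) hyj
          exact h1 (congrArg Prod.fst this)
        have hup : y ∉ Up K Γ q i := by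
          rw [mem_Up_iff]
          rintro ⟨j, hj, hyj⟩
          have := huniq (j, i) (by simpa using hj) hyj
          exact h2 (congrArg Prod.snd this)
        rw [Set.indicator_of_notMem hup, Set.indicator_of_notMem hum,
          lp.single_apply_ne 2 p.2 _ h2, lp.single_apply_ne 2 p.1 _ h1]
  · rw [Gmap_eq_zero hex, H2_zero]
    have hup : y ∉ Up K Γ q i := by
      rw [mem_Up_iff]; rintro ⟨j, hj, hy⟩; exact hex ⟨(j, i), hj, hy⟩
    have hum : y ∉ Um K Γ q i := by
      rw [mem_Um_iff]; rintro ⟨j, hj, hy⟩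
      exact hex ⟨(i, j), fun hc => hj hc.symm, hy⟩
    rw [Set.indicator_of_notMem hup, Set.indicator_of_notMem hum]
    ring

include hΓ hq in
lemma summable_row (i : ℕ) : Summable (fun j => if j = i then 0 else Γ q i j) :=
  (hΓ.diag q hq i).summable

include hK0 hΓ hq in
lemma summable_col (i : ℕ) : Summable (fun j => if j = i then 0 else q j * Γ q j i) := by
  refine Summable.of_nonneg_of_le ?_ ?_ (hq.2.summable.mul_right K)
  · intro j
    by_cases h : j = i
    · simp [h]
    · simpa [h] using mul_nonneg (hq.1 j) (hΓ.nonneg q hq j i h)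
  · intro j
    by_cases h : j = i
    · simpa [h] using mul_nonneg (hq.1 j) hK0
    · simpa [h] using mul_le_mul_of_nonneg_left (Γ_le_K hΓ hq h) (hq.1 j)

lemma ite_mul_eq (i : ℕ) : (fun j => if j = i then (0:ℝ) else q i * Γ q i j)
    = fun j => q i * (if j = i then 0 else Γ q i j) :=
  funext fun j => by by_cases h : j = i <;> simp [h]

include hK0 hΓ hq in
lemma meas_Um (i : ℕ) : volume (Um K Γ q i)
    = ENNReal.ofReal (q i * ∑' j, if j = i then 0 else Γ q i j) := by
  have hd : Pairwise (Function.onFun Disjoint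
      fun j => if j = i then (∅ : Set (ℝ × ℝ)) else Aset K Γ q i j) := by
    intro j j' hjj
    unfold Function.onFun
    by_cases h : j = i
    · simp [h]
    by_cases h' : j' = i
    · simp [h']
    simp only [if_neg h, if_neg h', Set.disjoint_left]
    intro y hy hy'
    have := Aset_unique hK0 hΓ hq (p := (i, j)) (p' := (i, j'))
      (fun hc => h hc.symm) (fun hc => h' hc.symm) hy hy'
    exact hjj (congrArg Prod.snd this)
  rw [Um, measure_iUnion hd (fun j => by
    by_cases h : j = i
    · simp [h]
    · simpa [h] using Aset_meas K Γ q i j)]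
  have h1 : ∀ j, volume (if j = i then (∅ : Set (ℝ × ℝ)) else Aset K Γ q i j)
      = ENNReal.ofReal (if j = i then 0 else q i * Γ q i j) := fun j => by
    by_cases h : j = i
    · simp [h]
    · simp only [if_neg h]; exact Aset_vol K Γ q i j
  simp only [h1]
  rw [← ENNReal.ofReal_tsum_of_nonneg (fun j => by
      by_cases h : j = i
      · simp [h]
      · simpa [h] using qΓ_nonneg hΓ hq (fun hc : i = j => h hc.symm))
    (by rw [ite_mul_eq]; exact (summable_row hΓ hq i).mul_left (q i))]
  rw [ite_mul_eq, tsum_mul_left]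

include hK0 hΓ hq in
lemma meas_Up (i : ℕ) : volume (Up K Γ q i)
    = ENNReal.ofReal (∑' j, if j = i then 0 else q j * Γ q j i) := by
  have hd : Pairwise (Function.onFun Disjoint
      fun j => if j = i then (∅ : Set (ℝ × ℝ)) else Aset K Γ q j i) := by
    intro j j' hjj
    unfold Function.onFun
    by_cases h : j = i
    · simp [h]
    by_cases h' : j' = i
    · simp [h']
    simp only [if_neg h, if_neg h', Set.disjoint_left]
    intro y hy hy'
    have := Aset_unique hK0 hΓ hq (p := (j, i)) (p' := (j', i)) h h' hy hy'
    exact hjj (congrArg Prod.fst this)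
  rw [Up, measure_iUnion hd (fun j => by
    by_cases h : j = i
    · simp [h]
    · simpa [h] using Aset_meas K Γ q j i)]
  have h1 : ∀ j, volume (if j = i then (∅ : Set (ℝ × ℝ)) else Aset K Γ q j i)
      = ENNReal.ofReal (if j = i then 0 else q j * Γ q j i) := fun j => by
    by_cases h : j = i
    · simp [h]
    · simp only [if_neg h]; exact Aset_vol K Γ q j i
  simp only [h1]
  rw [← ENNReal.ofReal_tsum_of_nonneg (fun j => by
      by_cases h : j = i
      · simp [h]
      · simpa [h] using mul_nonneg (hq.1 j) (hΓ.nonneg q hq j i h))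
    (summable_col hK0 hΓ hq i)]

lemma Up_meas (i : ℕ) : MeasurableSet (Up K Γ q i) :=
  MeasurableSet.iUnion fun j => by
    by_cases h : j = i
    · simp [h]
    · simpa [h] using Aset_meas K Γ q j i

lemma Um_meas (i : ℕ) : MeasurableSet (Um K Γ q i) :=
  MeasurableSet.iUnion fun j => by
    by_cases h : j = i
    · simp [h]
    · simpa [h] using Aset_meas K Γ q i j

include hK0 hΓ hq in
lemma coord_int (i : ℕ) : Integrable (fun y : ℝ × ℝ => Gmap K Γ q y i) volume ∧
    (∫ y : ℝ × ℝ, Gmap K Γ q y i) =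
      (∑' j, if j = i then 0 else q j * Γ q j i)
        - q i * (∑' j, if j = i then 0 else Γ q i j) := by
  have hrw : (fun y : ℝ × ℝ => Gmap K Γ q y i)
      = fun y => (Up K Γ q i).indicator (fun _ => (1:ℝ)) y
        - (Um K Γ q i).indicator (fun _ => (1:ℝ)) y :=
    funext fun y => Gmap_coord hK0 hΓ hq i y
  have hip : Integrable ((Up K Γ q i).indicator (fun _ => (1:ℝ))) volume := by
    rw [integrable_indicator_iff (Up_meas i)]
    exact integrableOn_const (by rw [meas_Up hK0 hΓ hq i]; exact ENNReal.ofReal_ne_top)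
  have him : Integrable ((Um K Γ q i).indicator (fun _ => (1:ℝ))) volume := by
    rw [integrable_indicator_iff (Um_meas i)]
    exact integrableOn_const (by rw [meas_Um hK0 hΓ hq i]; exact ENNReal.ofReal_ne_top)
  constructor
  · rw [hrw]; exact hip.sub him
  · rw [hrw, integral_sub hip him, integral_indicator_const _ (Up_meas i),
      integral_indicator_const _ (Um_meas i), measureReal_def, measureReal_def, meas_Up hK0 hΓ hq i, meas_Um hK0 hΓ hq i,
      ENNReal.toReal_ofReal, ENNReal.toReal_ofReal]
    · simp
    · exact mul_nonneg (hq.1 i) (tsum_nonneg (row_nonneg hΓ hq i))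
    · exact tsum_nonneg fun j => by
        by_cases h : j = i
        · simp [h]
        · simpa [h] using mul_nonneg (hq.1 j) (hΓ.nonneg q hq j i h)

include hK0 hΓ hq in
lemma coord_val (i : ℕ) :
    (∑' j, if j = i then 0 else q j * Γ q j i)
        - q i * (∑' j, if j = i then 0 else Γ q i j) = ∑' j, q j * Γ q j i := by
  have hrow : (∑' j, if j = i then 0 else Γ q i j) = -(Γ q i i) := (hΓ.diag q hq i).tsum_eq
  have hS : Summable (fun j => q j * Γ q j i) := by
    have h2 : Summable (fun j => if j = i then q i * Γ q i i else 0) :=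
      summable_of_ne_finset_zero (s := {i}) (fun j hj => by
        simp only [Finset.mem_singleton] at hj; simp [hj])
    have := (summable_col hK0 hΓ hq i).add h2
    convert this using 1
    funext j
    by_cases h : j = i <;> simp [h]
  have := hS.tsum_eq_add_tsum_ite i
  rw [this, hrow]
  ring

/-- The union of all the `A_ij(q)`, `i ≠ j`. -/
def Btot (K : ℝ) (Γ : H2 → ℕ → ℕ → ℝ) (q : H2) : Set (ℝ × ℝ) :=
  ⋃ p : ℕ × ℕ, if p.1 = p.2 then ∅ else Aset K Γ q p.1 p.2

lemma Btot_meas : MeasurableSet (Btot K Γ q) :=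
  MeasurableSet.iUnion fun p => by
    by_cases h : p.1 = p.2
    · simp [h]
    · simpa [h] using Aset_meas K Γ q p.1 p.2

lemma mem_Btot {y : ℝ × ℝ} (h : ∃ p : ℕ × ℕ, p.1 ≠ p.2 ∧ y ∈ Aset K Γ q p.1 p.2) :
    y ∈ Btot K Γ q := by
  obtain ⟨p, hp, hy⟩ := h
  exact Set.mem_iUnion.2 ⟨p, by simpa [hp] using hy⟩

include hK0 hΓ hq in
lemma Btot_vol_lt : volume (Btot K Γ q) < ⊤ := by
  refine lt_of_le_of_lt (measure_iUnion_le _) ?_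
  rw [ENNReal.tsum_prod (f := fun i j => volume (if i = j then (∅ : Set (ℝ × ℝ))
    else Aset K Γ q i j))]
  have hrow : ∀ i : ℕ, (∑' j, volume (if i = j then (∅ : Set (ℝ × ℝ))
      else Aset K Γ q i j)) ≤ ENNReal.ofReal (q i * K) := by
    intro i
    have h1 : ∀ j, volume (if i = j then (∅ : Set (ℝ × ℝ)) else Aset K Γ q i j)
        = ENNReal.ofReal (if j = i then 0 else q i * Γ q i j) := fun j => by
      by_cases h : j = i
      · simp [h]
      · simp only [if_neg h, if_neg (fun hc : i = j => h hc.symm)]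
        exact Aset_vol K Γ q i j
    simp only [h1]
    rw [← ENNReal.ofReal_tsum_of_nonneg (fun j => by
        by_cases h : j = i
        · simp [h]
        · simpa [h] using qΓ_nonneg hΓ hq (fun hc : i = j => h hc.symm))
      (by rw [ite_mul_eq]; exact (summable_row hΓ hq i).mul_left (q i))]
    apply ENNReal.ofReal_le_ofReal
    rw [ite_mul_eq, tsum_mul_left, (hΓ.diag q hq i).tsum_eq]
    have h2 : -(Γ q i i) ≤ K := (neg_le_abs _).trans (hΓ.bound q hq i)
    exact mul_le_mul_of_nonneg_left h2 (hq.1 i)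
  refine lt_of_le_of_lt (ENNReal.tsum_le_tsum hrow) ?_
  rw [← ENNReal.ofReal_tsum_of_nonneg (fun i => mul_nonneg (hq.1 i) hK0)
    (hq.2.summable.mul_right K)]
  exact ENNReal.ofReal_lt_top

include hK0 hΓ hq in
lemma Gmap_sm : StronglyMeasurable (Gmap K Γ q) := by
  have hF : ∀ n : ℕ, StronglyMeasurable (fun y : ℝ × ℝ =>
      ∑ p ∈ Finset.range n ×ˢ Finset.range n,
        if p.1 = p.2 then (0 : H2) else
          (Aset K Γ q p.1 p.2).indicator
            (fun _ => (lp.single 2 p.2 1 - lp.single 2 p.1 1 : H2)) y) := by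
    intro n
    refine Finset.stronglyMeasurable_fun_sum _ fun p _ => ?_
    by_cases h : p.1 = p.2
    · simp only [if_pos h]; exact stronglyMeasurable_const
    · simp only [if_neg h]
      exact stronglyMeasurable_const.indicator (Aset_meas K Γ q p.1 p.2)
  refine stronglyMeasurable_of_tendsto Filter.atTop hF ?_
  rw [tendsto_pi_nhds]
  intro y
  by_cases hex : ∃ p : ℕ × ℕ, p.1 ≠ p.2 ∧ y ∈ Aset K Γ q p.1 p.2
  · obtain ⟨p, hp, hy⟩ := hex
    have hev : ∀ n, n ≥ max p.1 p.2 + 1 →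
        (∑ p' ∈ Finset.range n ×ˢ Finset.range n,
          if p'.1 = p'.2 then (0 : H2) else
            (Aset K Γ q p'.1 p'.2).indicator
              (fun _ => (lp.single 2 p'.2 1 - lp.single 2 p'.1 1 : H2)) y)
          = Gmap K Γ q y := by
      intro n hn
      rw [Gmap_eq hK0 hΓ hq hp hy]
      have hmem : p ∈ Finset.range n ×ˢ Finset.range n := by
        rw [Finset.mem_product, Finset.mem_range, Finset.mem_range]
        constructor
        · exact lt_of_le_of_lt (le_max_left _ _) hn
        · exact lt_of_le_of_lt (le_max_right _ _) hn
      rw [Finset.sum_eq_single_of_mem p hmem]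
      · rw [if_neg hp, Set.indicator_of_mem hy]
      · intro p' _ hne
        by_cases h : p'.1 = p'.2
        · simp [h]
        · rw [if_neg h]
          refine Set.indicator_of_notMem (fun hy' => ?_) _
          exact hne (Aset_unique hK0 hΓ hq h hp hy' hy)
    exact Filter.Tendsto.congr' (Filter.eventually_atTop.2 ⟨_, fun n hn => (hev n hn).symm⟩) tendsto_const_nhds
  · have hz : Gmap K Γ q y = 0 := Gmap_eq_zero hex
    have hev : ∀ n : ℕ,
        (∑ p' ∈ Finset.range n ×ˢ Finset.range n,
          if p'.1 = p'.2 then (0 : H2) else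
            (Aset K Γ q p'.1 p'.2).indicator
              (fun _ => (lp.single 2 p'.2 1 - lp.single 2 p'.1 1 : H2)) y)
          = Gmap K Γ q y := by
      intro n
      rw [hz]
      refine Finset.sum_eq_zero fun p' _ => ?_
      by_cases h : p'.1 = p'.2
      · simp [h]
      · rw [if_neg h]
        exact Set.indicator_of_notMem (fun hy' => hex ⟨p', h, hy'⟩) _
    simp only [hev]
    exact tendsto_const_nhds

include hK0 hΓ hq in
lemma Gmap_integrable : Integrable (Gmap K Γ q) volume := by
  refine Integrable.mono' (g := (Btot K Γ q).indicator fun _ => (2:ℝ)) ?_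
    (Gmap_sm hK0 hΓ hq).aestronglyMeasurable (Filter.Eventually.of_forall fun y => ?_)
  · rw [integrable_indicator_iff Btot_meas]
    exact integrableOn_const (Btot_vol_lt hK0 hΓ hq).ne
  · by_cases hex : ∃ p : ℕ × ℕ, p.1 ≠ p.2 ∧ y ∈ Aset K Γ q p.1 p.2
    · obtain ⟨p, hp, hy⟩ := hex
      rw [Gmap_eq hK0 hΓ hq hp hy, Set.indicator_of_mem (mem_Btot ⟨p, hp, hy⟩)]
      refine (norm_sub_le _ _).trans ?_
      rw [norm_H2_single, norm_H2_single]
      norm_num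
    · rw [Gmap_eq_zero hex, norm_zero]
      exact Set.indicator_nonneg (fun _ _ => by norm_num) y
end Main

theorem stmt8 (K : ℝ) (hK0 : 0 ≤ K) (Γ : H2 → ℕ → ℕ → ℝ) (hΓ : RateMatrix K Γ)
    (q : H2) (hq : q ∈ simplexS) :
    (∀ i, Integrable (fun y : ℝ × ℝ => Gmap K Γ q y i) volume ∧
      (∫ y : ℝ × ℝ, Gmap K Γ q y i) =
        (∑' j, if j = i then 0 else q j * Γ q j i)
          - q i * (∑' j, if j = i then 0 else Γ q i j) ∧
      (∫ y : ℝ × ℝ, Gmap K Γ q y i) = ∑' j, q j * Γ q j i) ∧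
    Integrable (fun y : ℝ × ℝ => Gmap K Γ q y) volume ∧
    ∃ bq : H2, (∀ i, bq i = ∑' j, q j * Γ q j i) ∧
      (∫ y : ℝ × ℝ, Gmap K Γ q y) = bq := by
  have hglob : Integrable (fun y : ℝ × ℝ => Gmap K Γ q y) volume := Gmap_integrable hK0 hΓ hq
  refine ⟨fun i => ⟨(coord_int hK0 hΓ hq i).1, (coord_int hK0 hΓ hq i).2,
    (coord_int hK0 hΓ hq i).2.trans (coord_val hK0 hΓ hq i)⟩, hglob,
    ⟨∫ y : ℝ × ℝ, Gmap K Γ q y, fun i => ?_, rfl⟩⟩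
  have h1 : (∫ y : ℝ × ℝ, evalCLM i (Gmap K Γ q y)) = evalCLM i (∫ y : ℝ × ℝ, Gmap K Γ q y) :=
    (evalCLM i).integral_comp_comm hglob
  have h2 : (∫ y : ℝ × ℝ, Gmap K Γ q y : H2) i = ∫ y : ℝ × ℝ, Gmap K Γ q y i := h1.symm
  exact h2.trans ((coord_int hK0 hΓ hq i).2.trans (coord_val hK0 hΓ hq i))
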